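/- Let f be a continuous function between metric spaces (X,d) and (Y,ρ), and let A be a subset of X. If f is TB-regular on A, then f is TB-regular on the closure of A. -/

import Mathlib

/-- `f` is TB-regular on a subset `B` of `X` if `f '' S` is totally bounded for every
totally bounded subset `S` of `B`. -/
def TBRegularOn {X Y : Type*} [MetricSpace X] [MetricSpace Y] (f : X → Y) (B : Set X) : Prop :=
  ∀ S : Set X, S ⊆ B → TotallyBounded S → TotallyBounded (f '' S)

open Set Filter Metric Topology

/-- If for every `ε > 0` every point of `T` is within `ε` of some totally bounded set
(depending on `ε`), then `T` is totally bounded. -/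
lemma totallyBounded_of_near {X : Type*} [MetricSpace X] (T : Set X)
    (h : ∀ ε > 0, ∃ C : Set X, TotallyBounded C ∧ ∀ t ∈ T, ∃ c ∈ C, dist t c < ε) :
    TotallyBounded T := by
  rw [Metric.totallyBounded_iff]
  intro ε hε
  obtain ⟨C, hC, hTC⟩ := h (ε / 2) (by linarith)
  obtain ⟨t, htfin, hCt⟩ := (Metric.totallyBounded_iff.1 hC) (ε / 2) (by linarith)
  refine ⟨t, htfin, fun x hx => ?_⟩
  obtain ⟨c, hc, hxc⟩ := hTC x hx
  obtain ⟨y, hy, hcy⟩ := Set.mem_iUnion₂.1 (hCt hc)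
  refine Set.mem_iUnion₂.2 ⟨y, hy, ?_⟩
  simp only [Metric.mem_ball] at hcy ⊢
  calc dist x y ≤ dist x c + dist c y := dist_triangle _ _ _
    _ < ε / 2 + ε / 2 := add_lt_add hxc hcy
    _ = ε := by ring

/-- A totally bounded set has a countable dense subset contained in it. -/
lemma exists_countable_dense_subset_of_tb {X : Type*} [MetricSpace X] {S : Set X}
    (hS : TotallyBounded S) :
    ∃ D : Set X, D ⊆ S ∧ D.Countable ∧ S ⊆ closure D := by
  have h : ∀ m : ℕ, ∃ t : Set X, t ⊆ S ∧ t.Finite ∧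
      S ⊆ ⋃ y ∈ t, {x | dist x y < 1 / (m + 1)} := by
    intro m
    exact hS.exists_subset (Metric.dist_mem_uniformity (by positivity))
  choose t ht htfin hcov using h
  refine ⟨⋃ m, t m, Set.iUnion_subset ht, Set.countable_iUnion (fun m => (htfin m).countable),
    fun x hx => Metric.mem_closure_iff.2 fun ε hε => ?_⟩
  obtain ⟨m, hm⟩ := exists_nat_one_div_lt hε
  obtain ⟨y, hy, hxy⟩ := Set.mem_iUnion₂.1 (hcov m hx)
  exact ⟨y, Set.mem_iUnion.2 ⟨m, hy⟩, lt_trans hxy hm⟩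

theorem tbRegularOn_closure {X Y : Type*} [MetricSpace X] [MetricSpace Y]
    (f : X → Y) (hf : Continuous f) (A : Set X) (hA : TBRegularOn f A) :
    TBRegularOn f (closure A) := by
  intro S hSA hS
  obtain ⟨D, hDS, hDc, hSD⟩ := exists_countable_dense_subset_of_tb hS
  rcases D.eq_empty_or_nonempty with hD | hD
  · subst hD
    have : S = ∅ := by simpa [closure_empty, Set.subset_empty_iff] using hSD
    simp [this, totallyBounded_empty]
  obtain ⟨e, he⟩ := hDc.exists_eq_range hD
  have heD : ∀ k, e k ∈ D := fun k => he ▸ Set.mem_range_self k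
  -- approximants in A
  have happ : ∀ k n : ℕ, ∃ a ∈ A, dist (e k) a < 1 / (n + 1) := by
    intro k n
    exact Metric.mem_closure_iff.1 (hSA (hDS (heD k))) _ (by positivity)
  choose a haA hadist using happ
  -- the sequences converge
  have htendsto : ∀ k : ℕ, Tendsto (fun n => a k (n + k)) atTop (𝓝 (e k)) := by
    intro k
    rw [tendsto_iff_dist_tendsto_zero]
    refine squeeze_zero (g := fun n : ℕ => 1 / ((n : ℝ) + 1)) (fun n => dist_nonneg)
      (fun n => ?_) tendsto_one_div_add_atTop_nhds_zero_nat
    rw [dist_comm]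
    refine le_of_lt (lt_of_lt_of_le (hadist k (n + k)) ?_)
    apply one_div_le_one_div_of_le
    · positivity
    · push_cast; linarith
  -- the tail set
  set T : Set X := ⋃ k, Set.range (fun n => a k (n + k)) with hT
  have hTA : T ⊆ A := by
    rintro x hx
    obtain ⟨k, hk⟩ := Set.mem_iUnion.1 hx
    obtain ⟨n, rfl⟩ := hk
    exact haA k (n + k)
  -- each tail is totally bounded
  have htailTB : ∀ k : ℕ, TotallyBounded (Set.range (fun n => a k (n + k))) :=
    fun k => ((htendsto k).isCompact_insert_range.totallyBounded).subset
      (Set.subset_insert _ _)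
  -- T is totally bounded
  have hTtb : TotallyBounded T := by
    apply totallyBounded_of_near
    intro ε hε
    obtain ⟨K, hK⟩ := exists_nat_one_div_lt hε
    refine ⟨S ∪ ⋃ k ∈ Finset.range (K + 1), Set.range (fun n => a k (n + k)),
      hS.union ?_, ?_⟩
    · induction (Finset.range (K + 1)) using Finset.induction with
      | empty => simp [totallyBounded_empty]
      | insert _ _ h ih =>
        rw [Finset.set_biUnion_insert]
        exact (htailTB _).union ih
    · rintro x hx
      obtain ⟨k, hk⟩ := Set.mem_iUnion.1 hx
      obtain ⟨n, rfl⟩ := hk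
      rcases le_or_gt k K with hkK | hkK
      · refine ⟨a k (n + k), Set.mem_union_right _ ?_, by simp [hε]⟩
        exact Set.mem_biUnion (Finset.mem_range.2 (Nat.lt_succ_of_le hkK))
          (Set.mem_range_self n)
      · refine ⟨e k, Set.mem_union_left _ (hDS (heD k)), ?_⟩
        rw [dist_comm]
        refine lt_trans (lt_of_lt_of_le (hadist k (n + k)) ?_) hK
        apply one_div_le_one_div_of_le
        · positivity
        · have h1 : (K : ℝ) < k := by exact_mod_cast hkK
          have h2 : (0 : ℝ) ≤ n := Nat.cast_nonneg n
          push_cast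
          linarith
  -- f '' D ⊆ closure (f '' T)
  have hfD : f '' D ⊆ closure (f '' T) := by
    rintro y ⟨x, hx, rfl⟩
    rw [he] at hx
    obtain ⟨k, rfl⟩ := hx
    refine mem_closure_of_tendsto ((hf.continuousAt).tendsto.comp (htendsto k))
      (Filter.Eventually.of_forall fun n => ?_)
    exact Set.mem_image_of_mem f (Set.mem_iUnion.2 ⟨k, Set.mem_range_self n⟩)
  -- conclude
  have hfS : f '' S ⊆ closure (f '' T) := by
    calc f '' S ⊆ f '' closure D := Set.image_mono hSD
      _ ⊆ closure (f '' D) := image_closure_subset_closure_image hf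
      _ ⊆ closure (closure (f '' T)) := closure_mono hfD
      _ = closure (f '' T) := closure_closure
  exact ((hA T hTA hTtb).closure).subset hfS
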